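/- Let H be a horizontal path with m East steps and m West steps, and let V be a vertical path with n North steps and n South steps. For every integer k with k ≥ 1, the number of shuffles of V and H whose signed peak-count has absolute value k equals 2 · C(m+n, n−k) · C(m+n, n+k), and the number of shuffles with signed peak-count 0 equals C(m+n, n)², where C(a,b) denotes the binomial coefficient, taken to be 0 unless 0 ≤ b ≤ a. -/

import Mathlib

inductive Step : Type
  | E | W | N | S
deriving DecidableEq, Repr

open Step

/-- A step is vertical (North or South). -/
def isVert : Step → Bool
  | N => true
  | S => true
  | _ => false

/-- A step is horizontal (East or West). -/
def isHoriz : Step → Bool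
  | E => true
  | W => true
  | _ => false

/-- `σ` is a shuffle (interleaving) of the vertical path `V` and horizontal path `H`:
its subsequence of vertical steps is `V` and its subsequence of horizontal steps is `H`. -/
def IsShuffle (V H σ : List Step) : Prop :=
  σ.filter isVert = V ∧ σ.filter isHoriz = H

/-- The list of adjacent pairs `(σ_i, σ_{i+1})` of a list. -/
def pairs (σ : List Step) : List (Step × Step) := σ.zip σ.tail

/-- Signed peak-count: (# of (N,W) adjacent pairs) − (# of (E,S) adjacent pairs). -/
def signedPeak (σ : List Step) : ℤ :=
  (((pairs σ).filter (fun p => decide (p.1 = N ∧ p.2 = W))).length : ℤ)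
  - (((pairs σ).filter (fun p => decide (p.1 = E ∧ p.2 = S))).length : ℤ)

/-- Peak-count: (# of (N,W) adjacent pairs) + (# of (E,S) adjacent pairs). -/
def peakCount (σ : List Step) : ℕ :=
  ((pairs σ).filter (fun p => decide (p.1 = N ∧ p.2 = W))).length
  + ((pairs σ).filter (fun p => decide (p.1 = E ∧ p.2 = S))).length

/-- Binomial coefficient with integer arguments, equal to 0 unless `0 ≤ b ≤ a`. -/
def zch (a b : ℤ) : ℕ := if 0 ≤ b ∧ b ≤ a then a.toNat.choose b.toNat else 0

/- ### auxiliary -/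

instance : Fintype Step :=
  ⟨⟨{E, W, N, S}, by decide⟩, by intro x; cases x <;> decide⟩

lemma isHoriz_eq_not_isVert (s : Step) : isHoriz s = !isVert s := by cases s <;> rfl

/-- pair contribution -/
def pc : Step → Step → ℤ
  | N, W => 1
  | E, S => -1
  | _, _ => 0

def pcO : Option Step → Option Step → ℤ
  | some x, some y => pc x y
  | _, _ => 0

lemma pairs_cons_cons (x y : Step) (t : List Step) :
    pairs (x :: y :: t) = (x, y) :: pairs (y :: t) := rfl

lemma sp_nil : signedPeak [] = 0 := rfl
lemma sp_single (x : Step) : signedPeak [x] = 0 := rfl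

lemma sp_cons (x : Step) (l : List Step) :
    signedPeak (x :: l) = pcO (some x) l.head? + signedPeak l := by
  cases l with
  | nil => simp [sp_single, sp_nil, pcO]
  | cons y t =>
    show signedPeak (x :: y :: t) = pcO (some x) (some y) + signedPeak (y :: t)
    unfold signedPeak
    rw [pairs_cons_cons]
    cases x <;> cases y <;>
      simp [pcO, pc, List.filter_cons] <;> push_cast <;> ring
lemma sp_append (A B : List Step) :
    signedPeak (A ++ B) = signedPeak A + signedPeak B + pcO A.getLast? B.head? := by
  induction A with
  | nil => simp [sp_nil, pcO]
  | cons x A' ih =>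
    rw [List.cons_append, sp_cons, ih, sp_cons]
    cases A' with
    | nil => simp [sp_nil, pcO]; ring
    | cons z t =>
      rw [List.getLast?_cons_cons]
      simp only [List.cons_append, List.head?_cons]
      ring

lemma sp_horiz {l : List Step} (hl : ∀ s ∈ l, isHoriz s = true) : signedPeak l = 0 := by
  induction l with
  | nil => rfl
  | cons x t ih =>
    rw [sp_cons, ih (fun s hs => hl s (List.mem_cons_of_mem _ hs))]
    have hx := hl x List.mem_cons_self
    cases t with
    | nil => simp [pcO]
    | cons y t' =>
      have hy := hl y (by simp)
      cases x <;> cases y <;> simp_all [pcO, pc, isHoriz]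

lemma pcO_N (o : Option Step) : pcO o (some N) = 0 := by
  rcases o with _ | x
  · rfl
  · cases x <;> rfl

lemma pcO_S (o : Option Step) : pcO o (some S) = (if o = some E then -1 else 0) := by
  rcases o with _ | x
  · rfl
  · cases x <;> rfl

lemma sp_N_cons {ρ : List Step} (hρ : ∀ s ∈ ρ, isHoriz s = true) :
    signedPeak (N :: ρ) = (if ρ.head? = some W then 1 else 0) := by
  rw [sp_cons, sp_horiz hρ]
  cases ρ with
  | nil => simp [pcO]
  | cons y t =>
    have hy := hρ y (by simp)
    cases y <;> simp_all [pcO, pc, isHoriz]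

lemma sp_S_cons {ρ : List Step} (hρ : ∀ s ∈ ρ, isHoriz s = true) :
    signedPeak (S :: ρ) = 0 := by
  rw [sp_cons, sp_horiz hρ]
  cases ρ with
  | nil => simp [pcO]
  | cons y t => cases y <;> simp [pcO, pc]

/- ### extended binomial coefficients -/

def bch (n : ℕ) (r : ℤ) : ℕ := if 0 ≤ r then n.choose r.toNat else 0

lemma bch_of_neg {n : ℕ} {r : ℤ} (h : r < 0) : bch n r = 0 := by
  simp [bch, not_le.mpr h]

lemma bch_zero (n : ℕ) : bch n 0 = 1 := by simp [bch]

lemma bch_pascal (n : ℕ) (r : ℤ) : bch (n + 1) r = bch n r + bch n (r - 1) := by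
  rcases lt_trichotomy r 0 with h | rfl | h
  · rw [bch_of_neg h, bch_of_neg h, bch_of_neg (by omega)]
  · rw [bch_zero, bch_zero, bch_of_neg (by omega)]
  · obtain ⟨s, rfl⟩ : ∃ s : ℕ, r = (s : ℤ) + 1 := ⟨(r - 1).toNat, by omega⟩
    have h1 : ((s : ℤ) + 1).toNat = s + 1 := by omega
    have h2 : ((s : ℤ) + 1 - 1).toNat = s := by omega
    simp only [bch, if_pos (by omega : (0:ℤ) ≤ (s:ℤ) + 1), if_pos (by omega : (0:ℤ) ≤ (s:ℤ) + 1 - 1),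
      h1, h2]
    rw [Nat.choose_succ_succ' n s, Nat.add_comm]

lemma bch_eq_zero_of_gt {n : ℕ} {r : ℤ} (h : (n : ℤ) < r) : bch n r = 0 := by
  rw [bch, if_pos (by omega)]
  exact Nat.choose_eq_zero_of_lt (by omega)

/-- the master counting function -/
def g (a b c d : ℕ) (k : ℤ) : ℕ := bch (a + c) (c + k) * bch (b + d) (b + k)

lemma g_nil (a b : ℕ) (k : ℤ) : g a b 0 0 k = if k = 0 then 1 else 0 := by
  rcases lt_trichotomy k 0 with h | rfl | h
  · rw [if_neg (by omega), g, Nat.mul_eq_zero]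
    left; exact bch_of_neg (by omega)
  · simp [g, bch, Nat.choose_self]
  · rw [if_neg (by omega), g, Nat.mul_eq_zero]
    right; exact bch_eq_zero_of_gt (by omega)
lemma hN_E (a b c d : ℕ) (k : ℤ) :
    g (a+1) b c d k + g a b (c+1) d k = g (a+1) b (c+1) d k := by
  simp only [g, show a+1+c = a+c+1 from by ring, show a+(c+1) = a+c+1 from by ring,
    show a+1+(c+1) = (a+c+1)+1 from by ring]
  push_cast
  rw [bch_pascal (a+c+1) ((c:ℤ)+1+k), show (c:ℤ)+1+k-1 = (c:ℤ)+k from by ring]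
  ring

lemma hN_W (a b c d : ℕ) (k : ℤ) :
    g (a+1) b c d k + g a b c d (k-1) + g a b c (d+1) k
      = g (a+1) b c (d+1) k + g a b c d k := by
  simp only [g, show a+1+c = (a+c)+1 from by ring, show b+(d+1) = (b+d)+1 from by ring]
  rw [bch_pascal (a+c) ((c:ℤ)+k), bch_pascal (b+d) ((b:ℤ)+k),
    show (c:ℤ)+(k-1) = (c:ℤ)+k-1 from by ring, show (b:ℤ)+(k-1) = (b:ℤ)+k-1 from by ring]
  ring

lemma hS_W (a b c d : ℕ) (k : ℤ) :
    g a (b+1) c d k + g a b c (d+1) k = g a (b+1) c (d+1) k := by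
  simp only [g, show b+1+d = b+d+1 from by ring, show b+(d+1) = b+d+1 from by ring,
    show b+1+(d+1) = (b+d+1)+1 from by ring]
  push_cast
  rw [bch_pascal (b+d+1) ((b:ℤ)+1+k), show (b:ℤ)+1+k-1 = (b:ℤ)+k from by ring]
  ring

lemma hS_E (a b c d : ℕ) (k : ℤ) :
    g a (b+1) c d k + g a b (c+1) d k + g a b c d (k+1)
      = g a (b+1) (c+1) d k + g a b c d k := by
  simp only [g, show b+1+d = (b+d)+1 from by ring, show a+(c+1) = (a+c)+1 from by ring]
  push_cast
  rw [bch_pascal (b+d) ((b:ℤ)+1+k), bch_pascal (a+c) ((c:ℤ)+1+k),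
    show (b:ℤ)+1+k-1 = (b:ℤ)+k from by ring, show (c:ℤ)+1+k-1 = (c:ℤ)+k from by ring,
    show (c:ℤ)+(k+1) = (c:ℤ)+1+k from by ring, show (b:ℤ)+(k+1) = (b:ℤ)+1+k from by ring]
  ring
lemma isHoriz_cases {x : Step} (hx : isHoriz x = true) : x = E ∨ x = W := by
  cases x <;> simp_all [isHoriz]

lemma idN (a b : ℕ) (H : List Step) (hH : ∀ s ∈ H, isHoriz s = true) (k : ℤ) :
    ∑ j ∈ Finset.range (H.length + 1),
      ((g a b ((H.take j).count E) ((H.take j).count W)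
          (k - (if H[j]? = some W then 1 else 0)) : ℕ) : ℤ)
    = ((g (a+1) b (H.count E) (H.count W) k : ℕ) : ℤ) := by
  induction H using List.reverseRecOn generalizing k with
  | nil =>
    have hk0 : ∀ j : ℕ, k - (if ([] : List Step)[j]? = some W then 1 else 0) = k := by
      intro j; simp
    simp only [List.length_nil, List.take_nil, List.count_nil, Nat.zero_add, Finset.range_one,
      Finset.sum_singleton, hk0]
    rw [g_nil, g_nil]
  | append_singleton H x ih =>
    have hH' : ∀ s ∈ H, isHoriz s = true := fun s hs => hH s (by simp [hs])
    have hx : isHoriz x = true := hH x (by simp)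
    have hlen : (H ++ [x]).length = H.length + 1 := by simp
    rw [hlen, Finset.sum_range_succ, Finset.sum_range_succ]
    have ihk := ih hH'
    -- rewrite the j < H.length terms
    have hcong : ∀ k' : ℤ, ∀ j ∈ Finset.range H.length,
        ((g a b (((H ++ [x]).take j).count E) (((H ++ [x]).take j).count W)
          (k' - (if (H ++ [x])[j]? = some W then 1 else 0)) : ℕ) : ℤ)
        = ((g a b ((H.take j).count E) ((H.take j).count W)
          (k' - (if H[j]? = some W then 1 else 0)) : ℕ) : ℤ) := by
      intro k' j hj
      rw [Finset.mem_range] at hj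
      rw [List.take_append_of_le_length (le_of_lt hj), List.getElem?_append_left hj]
    -- the j = H.length term of old sums
    have hlast : ∀ k' : ℤ, H[H.length]? = none := by
      intro _; exact List.getElem?_eq_none le_rfl
    have htakeH : (H ++ [x]).take H.length = H := List.take_left
    have htakeAll : (H ++ [x]).take (H.length + 1) = H ++ [x] := by
      rw [← hlen]; exact List.take_length
    have hgetl : (H ++ [x])[H.length]? = some x := List.getElem?_concat_length
    have hgetnone : (H ++ [x])[H.length + 1]? = none := by
      apply List.getElem?_eq_none; simp
    rw [Finset.sum_congr rfl (hcong k), htakeH, hgetl, hgetnone, htakeAll]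
    have ihk' := ihk k
    rw [Finset.sum_range_succ, hlast k, List.take_length] at ihk'
    simp only [if_neg (by simp : ¬ (none : Option Step) = some W)] at ihk' ⊢
    rw [sub_zero] at ihk'
    rcases isHoriz_cases hx with rfl | rfl
    · -- x = E
      have c1 : (H ++ [E]).count E = H.count E + 1 := by simp
      have c2 : (H ++ [E]).count W = H.count W := by simp
      rw [c1, c2, if_neg (show ¬((some E : Option Step) = some W) from by decide), sub_zero]
      have hc : ((g (a+1) b (H.count E) (H.count W) k : ℕ) : ℤ)
          + ((g a b (H.count E + 1) (H.count W) k : ℕ) : ℤ)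
          = ((g (a+1) b (H.count E + 1) (H.count W) k : ℕ) : ℤ) := by
        exact_mod_cast congrArg (Nat.cast : ℕ → ℤ) (hN_E a b (H.count E) (H.count W) k)
      linarith [ihk', hc]
    · -- x = W
      have c1 : (H ++ [W]).count E = H.count E := by simp
      have c2 : (H ++ [W]).count W = H.count W + 1 := by simp
      rw [c1, c2, if_pos (rfl : (some W : Option Step) = some W), sub_zero]
      have hc : ((g (a+1) b (H.count E) (H.count W) k : ℕ) : ℤ)
          + ((g a b (H.count E) (H.count W) (k-1) : ℕ) : ℤ)
          + ((g a b (H.count E) (H.count W + 1) k : ℕ) : ℤ)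
          = ((g (a+1) b (H.count E) (H.count W + 1) k : ℕ) : ℤ)
          + ((g a b (H.count E) (H.count W) k : ℕ) : ℤ) := by
        exact_mod_cast congrArg (Nat.cast : ℕ → ℤ) (hN_W a b (H.count E) (H.count W) k)
      linarith [ihk', hc]
lemma idS (a b : ℕ) (H : List Step) (hH : ∀ s ∈ H, isHoriz s = true) (k : ℤ) :
    ∑ j ∈ Finset.range (H.length + 1),
      (((g a b ((H.take j).count E) ((H.take j).count W) k : ℕ) : ℤ)
        + (if (H.take j).getLast? = some E then
            ((g a b ((H.take j).dropLast.count E) ((H.take j).dropLast.count W) (k+1) : ℕ) : ℤ)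
            - ((g a b ((H.take j).dropLast.count E) ((H.take j).dropLast.count W) k : ℕ) : ℤ)
          else 0))
    = ((g a (b+1) (H.count E) (H.count W) k : ℕ) : ℤ) := by
  induction H using List.reverseRecOn generalizing k with
  | nil =>
    simp only [List.length_nil, List.take_nil, List.count_nil, Nat.zero_add, Finset.range_one,
      Finset.sum_singleton, List.getLast?_nil]
    rw [if_neg (show ¬((none : Option Step) = some E) from by decide), g_nil, g_nil]
    norm_num
  | append_singleton H x ih =>
    have hH' : ∀ s ∈ H, isHoriz s = true := fun s hs => hH s (by simp [hs])
    have hx : isHoriz x = true := hH x (by simp)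
    have hlen : (H ++ [x]).length = H.length + 1 := by simp
    rw [hlen, Finset.sum_range_succ]
    have hcong : ∀ j ∈ Finset.range (H.length + 1),
        (((g a b (((H ++ [x]).take j).count E) (((H ++ [x]).take j).count W) k : ℕ) : ℤ)
          + (if ((H ++ [x]).take j).getLast? = some E then
              ((g a b (((H ++ [x]).take j).dropLast.count E) (((H ++ [x]).take j).dropLast.count W) (k+1) : ℕ) : ℤ)
              - ((g a b (((H ++ [x]).take j).dropLast.count E) (((H ++ [x]).take j).dropLast.count W) k : ℕ) : ℤ)
            else 0))
        = (((g a b ((H.take j).count E) ((H.take j).count W) k : ℕ) : ℤ)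
          + (if (H.take j).getLast? = some E then
              ((g a b ((H.take j).dropLast.count E) ((H.take j).dropLast.count W) (k+1) : ℕ) : ℤ)
              - ((g a b ((H.take j).dropLast.count E) ((H.take j).dropLast.count W) k : ℕ) : ℤ)
            else 0)) := by
      intro j hj
      rw [Finset.mem_range] at hj
      rw [List.take_append_of_le_length (by omega)]
    rw [Finset.sum_congr rfl hcong, ih hH' k]
    have htakeAll : (H ++ [x]).take (H.length + 1) = H ++ [x] := by
      rw [← hlen]; exact List.take_length
    rw [htakeAll, List.getLast?_concat, List.dropLast_concat]
    rcases isHoriz_cases hx with rfl | rfl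
    · -- x = E
      have c1 : (H ++ [E]).count E = H.count E + 1 := by simp
      have c2 : (H ++ [E]).count W = H.count W := by simp
      rw [c1, c2, if_pos (rfl : (some E : Option Step) = some E)]
      have hc : ((g a (b+1) (H.count E) (H.count W) k : ℕ) : ℤ)
          + ((g a b (H.count E + 1) (H.count W) k : ℕ) : ℤ)
          + ((g a b (H.count E) (H.count W) (k+1) : ℕ) : ℤ)
          = ((g a (b+1) (H.count E + 1) (H.count W) k : ℕ) : ℤ)
          + ((g a b (H.count E) (H.count W) k : ℕ) : ℤ) := by
        exact_mod_cast congrArg (Nat.cast : ℕ → ℤ) (hS_E a b (H.count E) (H.count W) k)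
      linarith [hc]
    · -- x = W
      have c1 : (H ++ [W]).count E = H.count E := by simp
      have c2 : (H ++ [W]).count W = H.count W + 1 := by simp
      rw [c1, c2, if_neg (show ¬((some W : Option Step) = some E) from by decide)]
      have hc : ((g a (b+1) (H.count E) (H.count W) k : ℕ) : ℤ)
          + ((g a b (H.count E) (H.count W + 1) k : ℕ) : ℤ)
          = ((g a (b+1) (H.count E) (H.count W + 1) k : ℕ) : ℤ) := by
        exact_mod_cast congrArg (Nat.cast : ℕ → ℤ) (hS_W a b (H.count E) (H.count W) k)
      linarith [hc]
/- ### the finset of shuffles -/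

def allL : ℕ → Finset (List Step)
  | 0 => {[]}
  | n+1 => Finset.univ.biUnion (fun s : Step => (allL n).image (s :: ·))

lemma mem_allL : ∀ (n : ℕ) (l : List Step), l ∈ allL n ↔ l.length = n := by
  intro n
  induction n with
  | zero => intro l; cases l <;> simp [allL]
  | succ n ih =>
    intro l
    cases l with
    | nil => simp [allL]
    | cons x t =>
      simp only [allL, Finset.mem_biUnion, Finset.mem_univ, Finset.mem_image, true_and,
        List.length_cons]
      constructor
      · rintro ⟨s, m, hm, h⟩
        have h2 : m = t := (List.cons.injEq _ _ _ _ ▸ h).2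
        subst h2
        simp [(ih m).mp hm]
      · intro h
        exact ⟨x, t, (ih t).mpr (by omega), rfl⟩

lemma length_filter_vert_horiz (σ : List Step) :
    (σ.filter isVert).length + (σ.filter isHoriz).length = σ.length := by
  induction σ with
  | nil => rfl
  | cons x t ih => cases x <;> simp [List.filter_cons, isVert, isHoriz] <;> omega

def shufF (V H : List Step) : Finset (List Step) :=
  (allL (V.length + H.length)).filter (fun σ => σ.filter isVert = V ∧ σ.filter isHoriz = H)

lemma mem_shufF {V H σ : List Step} : σ ∈ shufF V H ↔ IsShuffle V H σ := by
  rw [shufF, Finset.mem_filter, mem_allL]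
  constructor
  · rintro ⟨-, h⟩; exact h
  · rintro ⟨h1, h2⟩
    refine ⟨?_, h1, h2⟩
    rw [← length_filter_vert_horiz σ, h1, h2]

lemma not_vert_horiz {s : Step} (h : ¬ isVert s = true) : isHoriz s = true := by
  cases s <;> simp_all [isVert, isHoriz]

lemma vert_not_horiz {s : Step} (h : isVert s = true) : isHoriz s = false := by
  cases s <;> simp_all [isVert, isHoriz]

lemma horiz_not_vert {s : Step} (h : isHoriz s = true) : isVert s = false := by
  cases s <;> simp_all [isVert, isHoriz]

lemma isVert_cases {x : Step} (hx : isVert x = true) : x = N ∨ x = S := by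
  cases x <;> simp_all [isVert]

lemma filter_concat_split (p : Step → Bool) :
    ∀ (σ W : List Step) (v : Step), σ.filter p = W ++ [v] →
      ∃ τ ρ, σ = τ ++ v :: ρ ∧ τ.filter p = W ∧ ρ.filter p = [] := by
  intro σ
  induction σ with
  | nil => intro W v h; simp at h
  | cons x σ' ih =>
    intro W v h
    by_cases hp : p x
    · rw [List.filter_cons_of_pos hp] at h
      cases W with
      | nil =>
        rw [List.nil_append] at h
        have hx : x = v := (List.cons.injEq _ _ _ _ ▸ h).1
        have h2 : σ'.filter p = [] := (List.cons.injEq _ _ _ _ ▸ h).2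
        exact ⟨[], σ', by rw [hx]; rfl, rfl, h2⟩
      | cons w W' =>
        rw [List.cons_append] at h
        have hx : x = w := (List.cons.injEq _ _ _ _ ▸ h).1
        have h2 : σ'.filter p = W' ++ [v] := (List.cons.injEq _ _ _ _ ▸ h).2
        obtain ⟨τ, ρ, rfl, hτ, hρ⟩ := ih W' v h2
        exact ⟨x :: τ, ρ, rfl, by rw [List.filter_cons_of_pos hp, hτ, hx], hρ⟩
    · rw [List.filter_cons_of_neg hp] at h
      obtain ⟨τ, ρ, rfl, hτ, hρ⟩ := ih W v h
      exact ⟨x :: τ, ρ, rfl, by rw [List.filter_cons_of_neg hp, hτ], hρ⟩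

lemma takeWhile_all_append (p : Step → Bool) (A : List Step) (x : Step) (B : List Step)
    (hA : ∀ a ∈ A, p a = true) (hx : p x = false) :
    (A ++ x :: B).takeWhile p = A := by
  induction A with
  | nil => simp [List.takeWhile_cons, hx]
  | cons a A' ih =>
    rw [List.cons_append, List.takeWhile_cons, hA a (by simp)]
    simp only [if_true, cond_true]
    rw [ih (fun a ha => hA a (by simp [ha]))]

/-- key invariant recovering `j` from an element of the `j`-th block -/
lemma tail_horiz_len {V H : List Step} {v : Step} {j : ℕ} {τ : List Step}
    (hv : isVert v = true) (hH : ∀ s ∈ H, isHoriz s = true) (hj : j ≤ H.length) :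
    ((τ ++ v :: H.drop j).reverse.takeWhile isHoriz).length = H.length - j := by
  have : (τ ++ v :: H.drop j).reverse = (H.drop j).reverse ++ v :: τ.reverse := by
    rw [List.reverse_append, List.reverse_cons, List.append_assoc]
    rfl
  rw [this, takeWhile_all_append _ _ _ _
      (fun a ha => hH a (List.drop_subset j H (List.mem_reverse.mp ha)))
      (vert_not_horiz hv),
    List.length_reverse, List.length_drop]

lemma shufF_concat_vert {V H : List Step} {v : Step} (hv : isVert v = true)
    (hH : ∀ s ∈ H, isHoriz s = true) :
    shufF (V ++ [v]) H = (Finset.range (H.length + 1)).biUnion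
      (fun j => (shufF V (H.take j)).image (fun τ => τ ++ v :: H.drop j)) := by
  ext σ
  simp only [Finset.mem_biUnion, Finset.mem_range, Finset.mem_image, mem_shufF]
  constructor
  · rintro ⟨h1, h2⟩
    obtain ⟨τ, ρ, rfl, hτ, hρ⟩ := filter_concat_split isVert σ V v h1
    have hρh : ∀ s ∈ ρ, isHoriz s = true := by
      intro s hs
      exact not_vert_horiz (List.filter_eq_nil_iff.mp hρ s hs)
    have h2' : τ.filter isHoriz ++ ρ = H := by
      have : (τ ++ v :: ρ).filter isHoriz = τ.filter isHoriz ++ ρ := by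
        rw [List.filter_append, List.filter_cons_of_neg (by simp [vert_not_horiz hv]),
          List.filter_eq_self.mpr hρh]
      rw [← this, h2]
    refine ⟨(τ.filter isHoriz).length, ?_, τ, ⟨hτ, ?_⟩, ?_⟩
    · have := congrArg List.length h2'
      rw [List.length_append] at this
      omega
    · rw [← h2', List.take_left]
    · rw [← h2', List.drop_left]
  · rintro ⟨j, hj, τ, ⟨hτV, hτH⟩, rfl⟩
    have hdh : ∀ s ∈ H.drop j, isHoriz s = true := fun s hs => hH s (List.drop_subset j H hs)
    constructor
    · have hnil : (H.drop j).filter isVert = [] :=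
        List.filter_eq_nil_iff.mpr (fun a ha => by
          have := horiz_not_vert (hdh a ha); simp [this])
      rw [List.filter_append, hτV, List.filter_cons_of_pos hv, hnil]
    · rw [List.filter_append, hτH, List.filter_cons_of_neg (by simp [vert_not_horiz hv]),
        List.filter_eq_self.mpr hdh, List.take_append_drop]
lemma card_filter_shufF_concat {V H : List Step} {v : Step} (hv : isVert v = true)
    (hH : ∀ s ∈ H, isHoriz s = true) (P : List Step → Prop) [DecidablePred P] :
    ((shufF (V ++ [v]) H).filter P).card
      = ∑ j ∈ Finset.range (H.length + 1),
          ((shufF V (H.take j)).filter (fun τ => P (τ ++ v :: H.drop j))).card := by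
  rw [shufF_concat_vert hv hH, Finset.filter_biUnion]
  rw [Finset.card_biUnion]
  · refine Finset.sum_congr rfl fun j hj => ?_
    rw [Finset.filter_image, Finset.card_image_of_injective _ (List.append_left_injective _)]
  · intro x hx y hy hxy
    rw [Finset.mem_coe, Finset.mem_range] at hx hy
    simp only [Function.onFun]
    rw [Finset.disjoint_left]
    intro σ hσx hσy
    rw [Finset.mem_filter, Finset.mem_image] at hσx hσy
    obtain ⟨⟨τ, hτ, he1⟩, -⟩ := hσx
    obtain ⟨⟨τ', hτ', he2⟩, -⟩ := hσy
    apply hxy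
    have h1 := tail_horiz_len (τ := τ) (V := V) hv hH (show x ≤ H.length by omega)
    have h2 := tail_horiz_len (τ := τ') (V := V) hv hH (show y ≤ H.length by omega)
    rw [he1] at h1
    rw [he2] at h2
    omega

lemma pcO_E (o : Option Step) : pcO o (some E) = 0 := by
  rcases o with _ | x
  · rfl
  · cases x <;> rfl

lemma eq_dropLast_concat_of_getLast?_E {τ : List Step} (hE : τ.getLast? = some E) :
    τ.dropLast ++ [E] = τ := by
  have hne : τ ≠ [] := by intro h; subst h; simp at hE
  have hgl : τ.getLast hne = E := by
    have := List.getLast?_eq_getLast hne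
    rw [this, Option.some_inj] at hE
    exact hE
  rw [← hgl]
  exact List.dropLast_append_getLast hne

lemma shufF_filter_lastE_pos {V P : List Step} (hPE : P.getLast? = some E) :
    (shufF V P).filter (fun τ => τ.getLast? = some E)
      = (shufF V P.dropLast).image (fun τ => τ ++ [E]) := by
  ext τ
  simp only [Finset.mem_filter, Finset.mem_image, mem_shufF]
  constructor
  · rintro ⟨⟨h1, h2⟩, hE⟩
    have hform := eq_dropLast_concat_of_getLast?_E hE
    refine ⟨τ.dropLast, ⟨?_, ?_⟩, hform⟩
    · rw [← hform, List.filter_append] at h1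
      simpa [List.filter, isVert] using h1
    · rw [← hform, List.filter_append] at h2
      have h2' : τ.dropLast.filter isHoriz ++ [E] = P := by
        simpa [List.filter, isHoriz] using h2
      have := congrArg List.dropLast h2'
      rw [List.dropLast_concat] at this
      rw [this]
  · rintro ⟨τ', ⟨h1, h2⟩, rfl⟩
    refine ⟨⟨?_, ?_⟩, List.getLast?_concat⟩
    · rw [List.filter_append, h1]
      simp [List.filter, isVert]
    · rw [List.filter_append, h2]
      have : P.dropLast ++ [E] = P := eq_dropLast_concat_of_getLast?_E hPE
      simpa [List.filter, isHoriz] using this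

lemma shufF_filter_lastE_neg {V P : List Step} (hPE : ¬ P.getLast? = some E) :
    (shufF V P).filter (fun τ => τ.getLast? = some E) = ∅ := by
  rw [Finset.filter_eq_empty_iff]
  intro τ hτ hE
  rw [mem_shufF] at hτ
  obtain ⟨h1, h2⟩ := hτ
  apply hPE
  have hform := eq_dropLast_concat_of_getLast?_E hE
  rw [← hform, List.filter_append] at h2
  have h2' : τ.dropLast.filter isHoriz ++ [E] = P := by
    simpa [List.filter, isHoriz] using h2
  rw [← h2']
  exact List.getLast?_concat

lemma g_nil' (c d : ℕ) (k : ℤ) : g 0 0 c d k = if k = 0 then 1 else 0 := by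
  rcases lt_trichotomy k 0 with h | rfl | h
  · rw [if_neg (by omega), g, Nat.mul_eq_zero]
    right
    exact bch_of_neg (by omega)
  · rw [if_pos rfl, g]
    have h1 : bch (0 + c) ((c:ℤ) + 0) = 1 := by
      rw [bch, if_pos (by positivity)]
      simp [Nat.choose_self]
    have h2 : bch (0 + d) (((0:ℕ):ℤ) + 0) = 1 := by
      rw [bch, if_pos (by norm_num)]
      simp
    rw [h1, h2]
  · rw [if_neg (by omega), g, Nat.mul_eq_zero]
    left
    exact bch_eq_zero_of_gt (by omega)

lemma shufF_nil {H : List Step} (hH : ∀ s ∈ H, isHoriz s = true) :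
    shufF ([] : List Step) H = {H} := by
  ext σ
  rw [mem_shufF, Finset.mem_singleton]
  constructor
  · rintro ⟨h1, h2⟩
    have hself : σ.filter isHoriz = σ :=
      List.filter_eq_self.mpr (fun a ha => not_vert_horiz (List.filter_eq_nil_iff.mp h1 a ha))
    rw [← h2, hself]
  · rintro rfl
    exact ⟨List.filter_eq_nil_iff.mpr (fun a ha => by simp [horiz_not_vert (hH a ha)]),
      List.filter_eq_self.mpr hH⟩
lemma card_lastE_sp {V P : List Step} (hV : ∀ s ∈ V, isVert s = true)
    (x : ℤ) :
    ((shufF V P).filter (fun τ => τ.getLast? = some E ∧ signedPeak τ = x)).card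
      = if P.getLast? = some E then
          ((shufF V P.dropLast).filter (fun τ => signedPeak τ = x)).card
        else 0 := by
  rw [← Finset.filter_filter]
  by_cases hPE : P.getLast? = some E
  · rw [if_pos hPE, shufF_filter_lastE_pos hPE, Finset.filter_image,
      Finset.card_image_of_injective _ (List.append_left_injective _)]
    congr 1
    apply Finset.filter_congr
    intro τ _
    rw [sp_append, sp_single]
    simp only [List.head?_cons, pcO_E]
    constructor <;> intro h <;> linarith
  · rw [if_neg hPE, shufF_filter_lastE_neg hPE]
    simp

lemma main_count (V : List Step) (hV : ∀ s ∈ V, isVert s = true) :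
    ∀ (H : List Step), (∀ s ∈ H, isHoriz s = true) → ∀ k : ℤ,
    ((shufF V H).filter (fun σ => signedPeak σ = k)).card
      = g (V.count N) (V.count S) (H.count E) (H.count W) k := by
  induction V using List.reverseRecOn with
  | nil =>
    intro H hH k
    rw [shufF_nil hH, Finset.filter_singleton, sp_horiz hH]
    simp only [List.count_nil]
    rw [g_nil']
    by_cases hk : k = 0
    · rw [if_pos hk.symm, if_pos hk, Finset.card_singleton]
    · rw [if_neg (fun h => hk h.symm), if_neg hk, Finset.card_empty]
  | append_singleton V v ihV =>
    intro H hH k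
    have hv : isVert v = true := hV v (by simp)
    have hV' : ∀ s ∈ V, isVert s = true := fun s hs => hV s (by simp [hs])
    have ih := ihV hV'
    rw [card_filter_shufF_concat hv hH]
    have hdh : ∀ j : ℕ, ∀ s ∈ H.drop j, isHoriz s = true :=
      fun j s hs => hH s (List.drop_subset j H hs)
    have hth : ∀ j : ℕ, ∀ s ∈ H.take j, isHoriz s = true :=
      fun j s hs => hH s (List.take_subset j H hs)
    rcases isVert_cases hv with rfl | rfl
    · -- v = N
      have hsum : ∀ j ∈ Finset.range (H.length + 1),
          ((shufF V (H.take j)).filter (fun τ => signedPeak (τ ++ N :: H.drop j) = k)).card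
          = g (V.count N) (V.count S) ((H.take j).count E) ((H.take j).count W)
              (k - (if H[j]? = some W then 1 else 0)) := by
        intro j hj
        have hfc : (shufF V (H.take j)).filter (fun τ => signedPeak (τ ++ N :: H.drop j) = k)
            = (shufF V (H.take j)).filter
                (fun τ => signedPeak τ = k - (if H[j]? = some W then 1 else 0)) := by
          apply Finset.filter_congr
          intro τ _
          rw [sp_append, sp_N_cons (hdh j), List.head?_cons, pcO_N, List.head?_drop]
          constructor <;> intro h <;> linarith
        rw [hfc, ih (H.take j) (hth j)]
      rw [Finset.sum_congr rfl hsum]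
      have hcN : (V ++ [N]).count N = V.count N + 1 := by simp
      have hcS : (V ++ [N]).count S = V.count S := by simp
      rw [hcN, hcS]
      exact_mod_cast idN (V.count N) (V.count S) H hH k
    · -- v = S
      have hsum : ∀ j ∈ Finset.range (H.length + 1),
          ((((shufF V (H.take j)).filter
              (fun τ => signedPeak (τ ++ S :: H.drop j) = k)).card : ℕ) : ℤ)
          = ((g (V.count N) (V.count S) ((H.take j).count E) ((H.take j).count W) k : ℕ) : ℤ)
            + (if (H.take j).getLast? = some E then
                ((g (V.count N) (V.count S) ((H.take j).dropLast.count E)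
                    ((H.take j).dropLast.count W) (k+1) : ℕ) : ℤ)
                - ((g (V.count N) (V.count S) ((H.take j).dropLast.count E)
                    ((H.take j).dropLast.count W) k : ℕ) : ℤ)
              else 0) := by
        intro j hj
        have hfc : (shufF V (H.take j)).filter (fun τ => signedPeak (τ ++ S :: H.drop j) = k)
            = ((shufF V (H.take j)).filter
                (fun τ => τ.getLast? = some E ∧ signedPeak τ = k + 1))
              ∪ ((shufF V (H.take j)).filter
                (fun τ => ¬ τ.getLast? = some E ∧ signedPeak τ = k)) := by
          rw [← Finset.filter_or]
          apply Finset.filter_congr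
          intro τ _
          rw [sp_append, sp_S_cons (hdh j), List.head?_cons, pcO_S]
          by_cases hE : τ.getLast? = some E
          · rw [if_pos hE]
            simp only [hE, not_true_eq_false, false_and, or_false, true_and]
            constructor <;> intro h <;> linarith
          · rw [if_neg hE]
            simp only [hE, not_false_eq_true, true_and, false_and, false_or]
            constructor <;> intro h <;> linarith
        have hdisj : Disjoint
            ((shufF V (H.take j)).filter (fun τ => τ.getLast? = some E ∧ signedPeak τ = k + 1))
            ((shufF V (H.take j)).filter (fun τ => ¬ τ.getLast? = some E ∧ signedPeak τ = k)) := by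
          rw [Finset.disjoint_left]
          intro τ h1 h2
          rw [Finset.mem_filter] at h1 h2
          exact h2.2.1 h1.2.1
        rw [hfc, Finset.card_union_of_disjoint hdisj]
        have key := Finset.card_filter_add_card_filter_not
          (s := (shufF V (H.take j)).filter (fun τ => signedPeak τ = k))
          (p := fun τ => τ.getLast? = some E)
        rw [Finset.filter_filter, Finset.filter_filter] at key
        have e1 : (shufF V (H.take j)).filter
              (fun τ => signedPeak τ = k ∧ τ.getLast? = some E)
            = (shufF V (H.take j)).filter
              (fun τ => τ.getLast? = some E ∧ signedPeak τ = k) :=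
          Finset.filter_congr (fun τ _ => and_comm)
        have e2 : (shufF V (H.take j)).filter
              (fun τ => signedPeak τ = k ∧ ¬ τ.getLast? = some E)
            = (shufF V (H.take j)).filter
              (fun τ => ¬ τ.getLast? = some E ∧ signedPeak τ = k) :=
          Finset.filter_congr (fun τ _ => and_comm)
        rw [e1, e2, ih (H.take j) (hth j) k] at key
        have hE1 := card_lastE_sp (V := V) (P := H.take j) hV' (k + 1)
        have hE2 := card_lastE_sp (V := V) (P := H.take j) hV' k
        have hth' : ∀ s ∈ (H.take j).dropLast, isHoriz s = true :=
          fun s hs => hth j s (List.dropLast_subset _ hs)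
        rw [ih (H.take j).dropLast hth' (k+1)] at hE1
        rw [ih (H.take j).dropLast hth' k] at hE2
        by_cases hPE : (H.take j).getLast? = some E
        · rw [if_pos hPE] at hE1 hE2 ⊢
          push_cast
          omega
        · rw [if_neg hPE] at hE1 hE2 ⊢
          push_cast
          omega
      have hcN : (V ++ [S]).count N = V.count N := by simp
      have hcS : (V ++ [S]).count S = V.count S + 1 := by simp
      rw [hcN, hcS]
      have hid := idS (V.count N) (V.count S) H hH k
      rw [← Finset.sum_congr rfl hsum] at hid
      exact_mod_cast hid
lemma zch_eq_bch (M : ℕ) (r : ℤ) : zch (M : ℤ) r = bch M r := by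
  unfold zch bch
  by_cases h1 : 0 ≤ r
  · by_cases h2 : r ≤ (M : ℤ)
    · rw [if_pos ⟨h1, h2⟩, if_pos h1, Int.toNat_natCast]
    · rw [if_neg (fun h => h2 h.2), if_pos h1]
      exact (Nat.choose_eq_zero_of_lt (by omega)).symm
  · rw [if_neg (fun h => h1 h.1), if_neg h1]

lemma bch_symm (M : ℕ) (r : ℤ) : bch M r = bch M ((M : ℤ) - r) := by
  by_cases h1 : 0 ≤ r
  · by_cases h2 : r ≤ (M : ℤ)
    · rw [bch, if_pos h1, bch, if_pos (by omega)]
      have ht : ((M : ℤ) - r).toNat = M - r.toNat := by omega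
      rw [ht]
      exact (Nat.choose_symm (by omega)).symm
    · rw [bch_eq_zero_of_gt (by omega), bch_of_neg (by omega)]
  · rw [bch_of_neg (by omega), bch_eq_zero_of_gt (by omega)]

lemma set_shuffle_eq (V H : List Step) (x : ℤ) :
    {σ : List Step | IsShuffle V H σ ∧ signedPeak σ = x}
      = ↑((shufF V H).filter (fun σ => signedPeak σ = x)) := by
  ext σ
  simp only [Set.mem_setOf_eq, Finset.coe_filter, mem_shufF]


/-- **Corollary (absolute signed peak-count enumeration for loops).**
If `H` is a horizontal loop with `m` East and `m` West steps and `V` is a vertical loop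
with `n` North and `n` South steps, then for `k ≥ 1` the number of shuffles of `V` and `H`
whose signed peak-count has absolute value `k` is `2·C(m+n, n−k)·C(m+n, n+k)`, and the
number with signed peak-count `0` is `C(m+n, n)²`. -/
theorem abs_signedPeak_enumeration_loops (m n : ℕ) (V H : List Step)
    (hV : ∀ s ∈ V, isVert s = true)
    (hVu : V.count Step.N = n) (hVd : V.count Step.S = n)
    (hH : ∀ s ∈ H, isHoriz s = true)
    (hHr : H.count Step.E = m) (hHl : H.count Step.W = m)
    (k : ℕ) (hk : 1 ≤ k) :
    {σ : List Step | IsShuffle V H σ ∧ (signedPeak σ).natAbs = k}.ncard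
      = 2 * (zch ((m : ℤ) + n) ((n : ℤ) - k) * zch ((m : ℤ) + n) ((n : ℤ) + k))
    ∧ {σ : List Step | IsShuffle V H σ ∧ signedPeak σ = 0}.ncard
      = ((m + n).choose n) ^ 2 := by
  have hmc : ∀ x : ℤ, {σ : List Step | IsShuffle V H σ ∧ signedPeak σ = x}.ncard
      = bch (n + m) ((m : ℤ) + x) * bch (n + m) ((n : ℤ) + x) := by
    intro x
    rw [set_shuffle_eq, Set.ncard_coe_finset, main_count V hV H hH x, hVu, hVd, hHr, hHl]
    rfl
  constructor
  · -- |sp| = k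
    have hsplit : {σ : List Step | IsShuffle V H σ ∧ (signedPeak σ).natAbs = k}
        = {σ : List Step | IsShuffle V H σ ∧ signedPeak σ = (k : ℤ)}
          ∪ {σ : List Step | IsShuffle V H σ ∧ signedPeak σ = -(k : ℤ)} := by
      ext σ
      simp only [Set.mem_setOf_eq, Set.mem_union, Int.natAbs_eq_iff]
      tauto
    have hdisj : Disjoint {σ : List Step | IsShuffle V H σ ∧ signedPeak σ = (k : ℤ)}
        {σ : List Step | IsShuffle V H σ ∧ signedPeak σ = -(k : ℤ)} := by
      rw [Set.disjoint_left]
      rintro σ ⟨-, h1⟩ ⟨-, h2⟩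
      rw [h1] at h2
      omega
    rw [hsplit, Set.ncard_union_eq hdisj
      (by rw [set_shuffle_eq]; exact Finset.finite_toSet _)
      (by rw [set_shuffle_eq]; exact Finset.finite_toSet _),
      hmc, hmc]
    have z1 : zch ((m : ℤ) + n) ((n : ℤ) - k) = bch (n + m) ((m : ℤ) + k) := by
      rw [show ((m : ℤ) + n) = ((n + m : ℕ) : ℤ) from by push_cast; ring, zch_eq_bch,
        bch_symm (n + m) ((n:ℤ) - k)]
      congr 1
      push_cast
      ring
    have z2 : zch ((m : ℤ) + n) ((n : ℤ) + k) = bch (n + m) ((n : ℤ) + k) := by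
      rw [show ((m : ℤ) + n) = ((n + m : ℕ) : ℤ) from by push_cast; ring, zch_eq_bch]
    have z3 : bch (n + m) ((m : ℤ) + -(k:ℤ)) = bch (n + m) ((n : ℤ) + k) := by
      rw [bch_symm (n + m) ((m:ℤ) + -(k:ℤ))]
      congr 1
      push_cast
      ring
    have z4 : bch (n + m) ((n : ℤ) + -(k:ℤ)) = bch (n + m) ((m : ℤ) + k) := by
      rw [bch_symm (n + m) ((n:ℤ) + -(k:ℤ))]
      congr 1
      push_cast
      ring
    rw [z1, z2, z3, z4]
    ring
  · -- sp = 0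
    rw [hmc 0]
    have e1 : bch (n + m) ((m : ℤ) + 0) = (m + n).choose n := by
      rw [bch, if_pos (by positivity)]
      rw [show ((m:ℤ) + 0).toNat = m from by omega]
      rw [show n + m = m + n from by ring]
      rw [← Nat.choose_symm (by omega : n ≤ m + n)]
      congr 1
      omega
    have e2 : bch (n + m) ((n : ℤ) + 0) = (m + n).choose n := by
      rw [bch, if_pos (by positivity)]
      rw [show ((n:ℤ) + 0).toNat = n from by omega]
      rw [show n + m = m + n from by ring]
    rw [e1, e2]
    ring
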